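/- Let Γ : C_d → (-∞, ∞] be defined by Γ(φ) = ∫ φ dP + ∫ e^{-φ(x)} dx over ℝ^d, where C_d is the class of proper convex lower semi-continuous coercive functions, and suppose φ* minimizes Γ over C_d with Γ(φ*) finite. If φ ∈ C_d satisfies max{φ(x), φ*(x)} ≤ φ^0 for all x in dom(φ) ∩ dom(φ*), then Γ(φ) - Γ(φ*) ≥ (1/2) e^{-φ^0} ∫_{dom(φ) ∩ dom(φ*)} (φ(x) - φ*(x))^2 dx. -/

import Mathlib

open MeasureTheory

/-- The class `C_d` of proper, convex, lower semi-continuous, coercive functions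
`ℝ^d → (-∞, ∞]`, encoded with values in `EReal`. -/
def CdE (d : ℕ) (φ : EuclideanSpace ℝ (Fin d) → EReal) : Prop :=
  LowerSemicontinuous φ ∧
  (∀ x, φ x ≠ ⊥) ∧ (∃ x, φ x ≠ ⊤) ∧
  (∀ x y : EuclideanSpace ℝ (Fin d), ∀ l : ℝ, 0 ≤ l → l ≤ 1 →
    φ (l • x + (1 - l) • y) ≤ (l : EReal) * φ x + ((1 - l : ℝ) : EReal) * φ y) ∧
  Filter.Tendsto φ (Filter.cocompact _) Filter.atTop

/-- Positive part of an extended real, as `ℝ≥0∞`. -/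
noncomputable def eposPart (y : EReal) : ENNReal :=
  if y = ⊤ then ⊤ else ENNReal.ofReal y.toReal

/-- Extended-real-valued integral of an `EReal`-valued function. -/
noncomputable def eIntegral {α : Type*} [MeasurableSpace α] (μ : Measure α)
    (f : α → EReal) : EReal :=
  ((∫⁻ x, eposPart (f x) ∂μ : ENNReal) : EReal) -
    ((∫⁻ x, eposPart (-(f x)) ∂μ : ENNReal) : EReal)

/-- `e^{-y}`, with `e^{-∞} = 0`. -/
noncomputable def negExpE (y : EReal) : ℝ :=
  if y = ⊤ then 0 else Real.exp (-(y.toReal))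

/-- The objective `Γ(φ) = ∫ φ dP + ∫ e^{-φ(x)} dx`. -/
noncomputable def GammaLC (d : ℕ) (P : Measure (EuclideanSpace ℝ (Fin d)))
    (φ : EuclideanSpace ℝ (Fin d) → EReal) : EReal :=
  eIntegral P φ +
    ((∫⁻ x, ENNReal.ofReal (negExpE (φ x)) ∂(volume : Measure (EuclideanSpace ℝ (Fin d)))
      : ENNReal) : EReal)

/-! ### Auxiliary lemmas -/

lemma exp_strong_convex {c a b l : ℝ} (ha : a ≤ c) (hb : b ≤ c) (hl0 : 0 ≤ l) (hl1 : l ≤ 1) :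
    Real.exp (-(l * a + (1 - l) * b)) + l * (1 - l) / 2 * Real.exp (-c) * (a - b) ^ 2 ≤
      l * Real.exp (-a) + (1 - l) * Real.exp (-b) := by
  set E := Real.exp (-c) with hE
  set g : ℝ → ℝ := fun t => Real.exp (-t) - E / 2 * t ^ 2 with hgdef
  have h1 : ∀ x : ℝ, HasDerivAt g (-Real.exp (-x) - E * x) x := by
    intro x
    have hexp : HasDerivAt (fun t : ℝ => Real.exp (-t)) (-Real.exp (-x)) x := by
      simpa [Function.comp_def] using (Real.hasDerivAt_exp (-x)).comp x (hasDerivAt_neg x)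
    have hsq : HasDerivAt (fun t : ℝ => E / 2 * t ^ 2) (E * x) x := by
      have := (hasDerivAt_pow 2 x).const_mul (E / 2)
      exact this.congr_deriv (by ring)
    exact hexp.sub hsq
  have hderiv : deriv g = fun x => -Real.exp (-x) - E * x := funext fun x => (h1 x).deriv
  have h2 : ∀ x : ℝ, HasDerivAt (deriv g) (Real.exp (-x) - E) x := by
    intro x
    rw [hderiv]
    have hexp : HasDerivAt (fun t : ℝ => -Real.exp (-t)) (Real.exp (-x)) x := by
      have : HasDerivAt (fun t : ℝ => Real.exp (-t)) (-Real.exp (-x)) x := by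
        simpa [Function.comp_def] using (Real.hasDerivAt_exp (-x)).comp x (hasDerivAt_neg x)
      exact this.neg.congr_deriv (by ring)
    exact (hexp.sub ((hasDerivAt_id x).const_mul E)).congr_deriv (by ring)
  have hg : ConvexOn ℝ (Set.Iic c) g := by
    apply convexOn_of_deriv2_nonneg (convex_Iic c)
    · exact fun x _ => (h1 x).differentiableAt.continuousAt.continuousWithinAt
    · exact fun x _ => (h1 x).differentiableAt.differentiableWithinAt
    · exact fun x _ => (h2 x).differentiableAt.differentiableWithinAt
    · intro x hx
      rw [interior_Iic] at hx
      have : deriv^[2] g x = Real.exp (-x) - E := by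
        simp only [Function.iterate_succ, Function.iterate_zero, Function.comp_apply, id]
        exact (h2 x).deriv
      rw [this]
      have : E ≤ Real.exp (-x) := Real.exp_le_exp.2 (by linarith [hx.out])
      linarith
  have key := hg.2 (Set.mem_Iic.2 ha) (Set.mem_Iic.2 hb) hl0 (by linarith : (0:ℝ) ≤ 1 - l) (by ring)
  simp only [smul_eq_mul, hgdef] at key
  nlinarith [key, sq_nonneg (a - b), Real.exp_pos (-c)]

lemma CdE.bddBelow {d : ℕ} {φ : EuclideanSpace ℝ (Fin d) → EReal} (h : CdE d φ) :
    ∃ m : ℝ, ∀ x, (m : EReal) ≤ φ x := by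
  obtain ⟨hlsc, hbot, -, -, hcoer⟩ := h
  have h0 : ∀ᶠ x in Filter.cocompact _, (0 : EReal) ≤ φ x :=
    hcoer.eventually_ge_atTop 0
  obtain ⟨K, hK, hKs⟩ := Filter.hasBasis_cocompact.eventually_iff.mp h0
  have hcov : K ⊆ ⋃ n : ℕ, φ ⁻¹' Set.Ioi ((-(n : ℝ) : ℝ) : EReal) := by
    intro x _
    obtain ⟨y, hy1, hy2⟩ := exists_between ((hbot x).bot_lt)
    have hyt : y ≠ ⊤ := fun hT => not_top_lt (hT ▸ hy2)
    have hyb : y ≠ ⊥ := hy1.ne'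
    obtain ⟨n, hn⟩ := exists_nat_ge (-(y.toReal))
    refine Set.mem_iUnion.2 ⟨n, ?_⟩
    have : ((-(n : ℝ) : ℝ) : EReal) ≤ y := by
      rw [← EReal.coe_toReal hyt hyb]
      exact_mod_cast (by linarith : -(n : ℝ) ≤ y.toReal)
    exact lt_of_le_of_lt this hy2
  obtain ⟨t, ht⟩ := hK.elim_finite_subcover (fun n : ℕ => φ ⁻¹' Set.Ioi ((-(n : ℝ) : ℝ) : EReal))
    (fun n => hlsc.isOpen_preimage _) hcov
  obtain ⟨N, hN⟩ : ∃ N : ℕ, ∀ n ∈ t, n ≤ N := ⟨t.sup id, fun n hn => Finset.le_sup (f := id) hn⟩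
  refine ⟨min (-(N : ℝ)) 0, fun x => ?_⟩
  by_cases hx : x ∈ K
  · obtain ⟨n, hn, hxn⟩ := Set.mem_iUnion₂.1 (ht hx)
    refine le_trans ?_ (le_of_lt hxn)
    have h1 : min (-(N:ℝ)) 0 ≤ -(n:ℝ) := le_trans (min_le_left _ _)
      (by have := hN n hn; exact_mod_cast neg_le_neg (by exact_mod_cast this))
    exact_mod_cast h1
  · refine le_trans ?_ (hKs hx)
    exact_mod_cast (min_le_right (-(N:ℝ)) 0)

lemma measurable_eposPart : Measurable eposPart := by
  unfold eposPart
  refine Measurable.ite ?_ measurable_const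
    (ENNReal.measurable_ofReal.comp measurable_ereal_toReal)
  exact measurableSet_singleton (⊤ : EReal)

lemma measurable_negExpE : Measurable negExpE := by
  unfold negExpE
  refine Measurable.ite ?_ measurable_const (measurable_ereal_toReal.neg.exp)
  exact measurableSet_singleton (⊤ : EReal)

lemma negExpE_nonneg (y : EReal) : 0 ≤ negExpE y := by
  unfold negExpE
  split
  · exact le_refl 0
  · exact (Real.exp_pos _).le

lemma ereal_ennreal_coe_eq {A : ENNReal} (hA : A ≠ ⊤) :
    ((A : EReal)) = ((A.toReal : ℝ) : EReal) := by
  rw [← EReal.toReal_coe_ennreal (x := A), EReal.coe_toReal]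
  · simpa using hA
  · simp

lemma eIntegral_eq {α : Type*} [MeasurableSpace α] {μ : Measure α} [IsFiniteMeasure μ]
    {g : α → EReal} {m : ℝ} (hm : ∀ x, (m : EReal) ≤ g x)
    (hmeas : Measurable g) (hp : ∫⁻ x, eposPart (g x) ∂μ ≠ ⊤) :
    Integrable (fun x => (g x).toReal) μ ∧ (∀ᵐ x ∂μ, g x ≠ ⊤) ∧
      eIntegral μ g = ((∫ x, (g x).toReal ∂μ : ℝ) : EReal) := by
  have hgb : ∀ x, g x ≠ ⊥ := fun x h => by
    have := hm x; rw [h] at this; exact (EReal.coe_ne_bot m) (le_bot_iff.1 this)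
  have hae : ∀ᵐ x ∂μ, g x ≠ ⊤ := by
    have := ae_lt_top (measurable_eposPart.comp hmeas) hp
    filter_upwards [this] with x hx hT
    rw [Function.comp_apply, hT] at hx; simp [eposPart] at hx
  have htoReal_lb : ∀ x, min m 0 ≤ (g x).toReal := by
    intro x
    by_cases hx : g x = ⊤
    · rw [hx]; simp [min_le_right]
    · refine le_trans (min_le_left m 0) ?_
      have := hm x
      rw [← EReal.coe_toReal hx (hgb x)] at this
      exact_mod_cast this
  have hneg_eq : ∀ x, eposPart (-(g x)) = ENNReal.ofReal (-(g x).toReal) := by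
    intro x
    by_cases hx : g x = ⊤
    · rw [hx]; simp [eposPart]
    · have : -(g x) ≠ ⊤ := by simp [EReal.neg_eq_top_iff, hgb x]
      rw [eposPart, if_neg this, EReal.toReal_neg_eq]
  have hpos_le : ∀ x, ENNReal.ofReal ((g x).toReal) ≤ eposPart (g x) := by
    intro x
    by_cases hx : g x = ⊤
    · simp [eposPart, hx]
    · simp [eposPart, hx]
  have hmeasR : Measurable (fun x => (g x).toReal) := hmeas.ereal_toReal
  have hneg_bd : ∀ x, ENNReal.ofReal (-(g x).toReal) ≤ ENNReal.ofReal (-(min m 0)) :=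
    fun x => ENNReal.ofReal_le_ofReal (by linarith [htoReal_lb x])
  have hnegfin : ∫⁻ x, ENNReal.ofReal (-(g x).toReal) ∂μ ≠ ⊤ := by
    refine ne_top_of_le_ne_top ?_ (lintegral_mono hneg_bd)
    rw [lintegral_const]
    exact ENNReal.mul_ne_top ENNReal.ofReal_ne_top (measure_ne_top μ _)
  have hposfin : ∫⁻ x, ENNReal.ofReal ((g x).toReal) ∂μ ≠ ⊤ :=
    ne_top_of_le_ne_top hp (lintegral_mono hpos_le)
  have hint : Integrable (fun x => (g x).toReal) μ := by
    refine ⟨hmeasR.aestronglyMeasurable, ?_⟩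
    rw [hasFiniteIntegral_iff_norm]
    have : ∀ x, ENNReal.ofReal ‖(g x).toReal‖ ≤
        ENNReal.ofReal ((g x).toReal) + ENNReal.ofReal (-(g x).toReal) := by
      intro x
      rcases le_total 0 ((g x).toReal) with h | h
      · refine le_trans (ENNReal.ofReal_le_ofReal
          (by rw [Real.norm_eq_abs, abs_of_nonneg h])) le_self_add
      · refine le_trans (ENNReal.ofReal_le_ofReal
          (by rw [Real.norm_eq_abs, abs_of_nonpos h])) le_add_self
    refine lt_of_le_of_lt (lintegral_mono this) ?_
    rw [lintegral_add_left (hmeasR.ennreal_ofReal)]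
    exact ENNReal.add_lt_top.2 ⟨hposfin.lt_top, hnegfin.lt_top⟩
  refine ⟨hint, hae, ?_⟩
  have e1 : ∫⁻ x, eposPart (g x) ∂μ = ∫⁻ x, ENNReal.ofReal ((g x).toReal) ∂μ := by
    refine lintegral_congr_ae ?_
    filter_upwards [hae] with x hx
    rw [eposPart, if_neg hx]
  have e2 : ∫⁻ x, eposPart (-(g x)) ∂μ = ∫⁻ x, ENNReal.ofReal (-(g x).toReal) ∂μ :=
    lintegral_congr fun x => hneg_eq x
  rw [eIntegral, e1, e2,
    MeasureTheory.integral_eq_lintegral_pos_part_sub_lintegral_neg_part hint]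
  rw [EReal.coe_sub]
  rw [ereal_ennreal_coe_eq hposfin, ereal_ennreal_coe_eq hnegfin]

lemma cmul_coe (l r : ℝ) : (l : EReal) * (r : EReal) = ((l * r : ℝ) : EReal) :=
  (EReal.coe_mul l r).symm

lemma cmul_ne_bot {l : ℝ} (hl : 0 ≤ l) {y : EReal} (hy : y ≠ ⊥) : (l : EReal) * y ≠ ⊥ := by
  induction y with
  | bot => exact absurd rfl hy
  | coe r => rw [cmul_coe]; exact EReal.coe_ne_bot _
  | top =>
    rcases eq_or_lt_of_le hl with h | h
    · rw [← h]; simp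
    · rw [EReal.coe_mul_top_of_pos h]; simp

lemma cmul_top_iff {l : ℝ} (hl : 0 < l) {y : EReal} : (l : EReal) * y = ⊤ ↔ y = ⊤ := by
  induction y with
  | bot => simp [EReal.coe_mul_bot_of_pos hl]
  | coe r => rw [cmul_coe]; simp; exact EReal.coe_ne_top _
  | top => simp [EReal.coe_mul_top_of_pos hl]

lemma cmul_mono {l : ℝ} (hl : 0 ≤ l) : Monotone (fun y : EReal => (l : EReal) * y) :=
  fun _ _ h => mul_le_mul_of_nonneg_left h (by exact_mod_cast hl)

lemma cmul_cont {l : ℝ} (hl : l ≠ 0) : Continuous (fun y : EReal => (l : EReal) * y) := by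
  rw [continuous_iff_continuousAt]
  intro y
  have : ContinuousAt (fun p : EReal × EReal => p.1 * p.2) ((l : EReal), y) := by
    apply EReal.continuousAt_mul <;> simp [hl]
  exact this.comp (continuous_const.prodMk continuous_id).continuousAt

lemma CdE.combo {d : ℕ} {φ φs : EuclideanSpace ℝ (Fin d) → EReal}
    (hφ : CdE d φ) (hφs : CdE d φs) {l : ℝ} (hl0 : 0 < l) (hl1 : l < 1)
    (hS : ∃ x, φ x ≠ ⊤ ∧ φs x ≠ ⊤) :
    CdE d (fun x => (l : EReal) * φ x + ((1 - l : ℝ) : EReal) * φs x) := by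
  obtain ⟨hlsc1, hbot1, -, hconv1, hcoer1⟩ := hφ
  obtain ⟨hlsc2, hbot2, -, hconv2, hcoer2⟩ := hφs
  have hl1' : (0:ℝ) < 1 - l := by linarith
  have hb1 : ∀ x, (l : EReal) * φ x ≠ ⊥ := fun x => cmul_ne_bot hl0.le (hbot1 x)
  have hb2 : ∀ x, ((1 - l : ℝ) : EReal) * φs x ≠ ⊥ := fun x => cmul_ne_bot hl1'.le (hbot2 x)
  refine ⟨?_, ?_, ?_, ?_, ?_⟩
  · have h1 : LowerSemicontinuous fun x => (l : EReal) * φ x :=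
      (cmul_cont hl0.ne').comp_lowerSemicontinuous hlsc1 (cmul_mono hl0.le)
    have h2 : LowerSemicontinuous fun x => ((1 - l : ℝ) : EReal) * φs x :=
      (cmul_cont hl1'.ne').comp_lowerSemicontinuous hlsc2 (cmul_mono hl1'.le)
    exact h1.add' h2 fun x => EReal.continuousAt_add (Or.inr (hb2 x)) (Or.inl (hb1 x))
  · intro x h
    exact absurd (EReal.add_eq_bot_iff.1 h) (by push_neg; exact ⟨hb1 x, hb2 x⟩)
  · obtain ⟨x, hx1, hx2⟩ := hS
    refine ⟨x, ?_⟩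
    lift φ x to ℝ using ⟨hx1, hbot1 x⟩ with A
    lift φs x to ℝ using ⟨hx2, hbot2 x⟩ with B
    rw [cmul_coe, cmul_coe, ← EReal.coe_add]
    exact EReal.coe_ne_top _
  · intro x y t ht0 ht1
    refine le_trans (add_le_add (cmul_mono hl0.le (hconv1 x y t ht0 ht1))
      (cmul_mono hl1'.le (hconv2 x y t ht0 ht1))) ?_
    rcases eq_or_lt_of_le ht0 with h0 | h0
    · subst h0; simp [zero_mul, one_mul]
    rcases eq_or_lt_of_le ht1 with h1 | h1
    · subst h1; simp [zero_mul, one_mul]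
    by_cases hφx : φ x = ⊤
    · have : (t : EReal) * ((l:EReal) * φ x + ((1-l:ℝ):EReal) * φs x) = ⊤ := by
        rw [cmul_top_iff h0]
        rw [hφx, EReal.coe_mul_top_of_pos hl0, EReal.top_add_of_ne_bot (hb2 x)]
      rw [this, EReal.top_add_of_ne_bot (cmul_ne_bot (by linarith) (fun hc =>
        absurd (EReal.add_eq_bot_iff.1 hc) (by push_neg; exact ⟨hb1 y, hb2 y⟩)))]
      exact le_top
    by_cases hφy : φ y = ⊤
    · have : ((1 - t:ℝ) : EReal) * ((l:EReal) * φ y + ((1-l:ℝ):EReal) * φs y) = ⊤ := by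
        rw [cmul_top_iff (by linarith)]
        rw [hφy, EReal.coe_mul_top_of_pos hl0, EReal.top_add_of_ne_bot (hb2 y)]
      rw [this, EReal.add_top_of_ne_bot (cmul_ne_bot ht0 (fun hc =>
        absurd (EReal.add_eq_bot_iff.1 hc) (by push_neg; exact ⟨hb1 x, hb2 x⟩)))]
      exact le_top
    by_cases hφsx : φs x = ⊤
    · have : (t : EReal) * ((l:EReal) * φ x + ((1-l:ℝ):EReal) * φs x) = ⊤ := by
        rw [cmul_top_iff h0]
        rw [hφsx, EReal.coe_mul_top_of_pos hl1', EReal.add_top_of_ne_bot (hb1 x)]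
      rw [this, EReal.top_add_of_ne_bot (cmul_ne_bot (by linarith) (fun hc =>
        absurd (EReal.add_eq_bot_iff.1 hc) (by push_neg; exact ⟨hb1 y, hb2 y⟩)))]
      exact le_top
    by_cases hφsy : φs y = ⊤
    · have : ((1 - t:ℝ) : EReal) * ((l:EReal) * φ y + ((1-l:ℝ):EReal) * φs y) = ⊤ := by
        rw [cmul_top_iff (by linarith)]
        rw [hφsy, EReal.coe_mul_top_of_pos hl1', EReal.add_top_of_ne_bot (hb1 y)]
      rw [this, EReal.add_top_of_ne_bot (cmul_ne_bot ht0 (fun hc =>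
        absurd (EReal.add_eq_bot_iff.1 hc) (by push_neg; exact ⟨hb1 x, hb2 x⟩)))]
      exact le_top
    lift φ x to ℝ using ⟨hφx, hbot1 x⟩ with A
    lift φ y to ℝ using ⟨hφy, hbot1 y⟩ with B
    lift φs x to ℝ using ⟨hφsx, hbot2 x⟩ with C
    lift φs y to ℝ using ⟨hφsy, hbot2 y⟩ with D
    exact le_of_eq (by push_cast; norm_cast; ring_nf)
  · rw [Filter.tendsto_atTop]
    intro b
    have h1 : ∀ᶠ x in Filter.cocompact _, φ x = ⊤ := by
      filter_upwards [hcoer1.eventually_ge_atTop ⊤] with x hx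
      exact top_le_iff.1 hx
    have h2 : ∀ᶠ x in Filter.cocompact _, φs x = ⊤ := by
      filter_upwards [hcoer2.eventually_ge_atTop ⊤] with x hx
      exact top_le_iff.1 hx
    filter_upwards [h1, h2] with x hx1 hx2
    rw [hx1, hx2, EReal.coe_mul_top_of_pos hl0, EReal.coe_mul_top_of_pos hl1']
    simp

section GammaParts

variable {d : ℕ} {P : Measure (EuclideanSpace ℝ (Fin d))} [IsProbabilityMeasure P]
variable {g : EuclideanSpace ℝ (Fin d) → EReal} {m : ℝ}

lemma eposPart_neg_fin (hm : ∀ x, (m : EReal) ≤ g x) :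
    ∫⁻ x, eposPart (-(g x)) ∂P ≠ ⊤ := by
  have hgb : ∀ x, g x ≠ ⊥ := fun x h => by
    have := hm x; rw [h] at this; exact (EReal.coe_ne_bot m) (le_bot_iff.1 this)
  have hbd : ∀ x, eposPart (-(g x)) ≤ ENNReal.ofReal (-(min m 0)) := by
    intro x
    by_cases hx : g x = ⊤
    · rw [hx]
      simp only [eposPart]
      norm_num
    · have hnt : -(g x) ≠ ⊤ := by simp [EReal.neg_eq_top_iff, hgb x]
      rw [eposPart, if_neg hnt, EReal.toReal_neg_eq]
      apply ENNReal.ofReal_le_ofReal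
      have h1 : min m 0 ≤ (g x).toReal := by
        refine le_trans (min_le_left m 0) ?_
        have := hm x
        rw [← EReal.coe_toReal hx (hgb x)] at this
        exact_mod_cast this
      linarith
  refine ne_top_of_le_ne_top ?_ (lintegral_mono hbd)
  rw [lintegral_const]
  exact ENNReal.mul_ne_top ENNReal.ofReal_ne_top (measure_ne_top P _)

lemma GammaLC_ne_bot (hm : ∀ x, (m : EReal) ≤ g x) : GammaLC d P g ≠ ⊥ := by
  rw [GammaLC]
  intro h
  rcases EReal.add_eq_bot_iff.1 h with h | h
  · rw [eIntegral, sub_eq_add_neg] at h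
    rcases EReal.add_eq_bot_iff.1 h with h | h
    · exact (EReal.coe_ennreal_ne_bot _) h
    · rw [EReal.neg_eq_bot_iff] at h
      exact absurd ((EReal.coe_ennreal_eq_top_iff).1 h) (eposPart_neg_fin hm)
  · exact (EReal.coe_ennreal_ne_bot _) h

lemma GammaLC_parts (hm : ∀ x, (m : EReal) ≤ g x)
    (hfin : GammaLC d P g ≠ ⊤) :
    (∫⁻ x, eposPart (g x) ∂P ≠ ⊤) ∧
      ((∫⁻ x, ENNReal.ofReal (negExpE (g x))
        ∂(volume : Measure (EuclideanSpace ℝ (Fin d)))) ≠ ⊤) := by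
  have hB := eposPart_neg_fin (P := P) hm
  rw [GammaLC] at hfin
  have hEbot : eIntegral P g ≠ ⊥ := by
    rw [eIntegral, sub_eq_add_neg]
    intro h
    rcases EReal.add_eq_bot_iff.1 h with h | h
    · exact (EReal.coe_ennreal_ne_bot _) h
    · rw [EReal.neg_eq_bot_iff] at h
      exact absurd ((EReal.coe_ennreal_eq_top_iff).1 h) hB
  constructor
  · intro hA
    apply hfin
    have h1 : eIntegral P g = ⊤ := by
      rw [eIntegral, hA, EReal.coe_ennreal_top,
        ereal_ennreal_coe_eq hB, EReal.top_sub_coe]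
    rw [h1, EReal.top_add_of_ne_bot (EReal.coe_ennreal_ne_bot _)]
  · intro hJ
    apply hfin
    rw [hJ, EReal.coe_ennreal_top, EReal.add_top_of_ne_bot hEbot]

lemma GammaLC_repr (hm : ∀ x, (m : EReal) ≤ g x) (hmeas : Measurable g)
    (hp : ∫⁻ x, eposPart (g x) ∂P ≠ ⊤)
    (hJ : (∫⁻ x, ENNReal.ofReal (negExpE (g x))
        ∂(volume : Measure (EuclideanSpace ℝ (Fin d)))) ≠ ⊤) :
    Integrable (fun x => (g x).toReal) P ∧ (∀ᵐ x ∂P, g x ≠ ⊤) ∧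
      GammaLC d P g = ((∫ x, (g x).toReal ∂P +
        (∫⁻ x, ENNReal.ofReal (negExpE (g x))
          ∂(volume : Measure (EuclideanSpace ℝ (Fin d)))).toReal : ℝ) : EReal) := by
  obtain ⟨hint, hae, hval⟩ := eIntegral_eq (μ := P) hm hmeas hp
  exact ⟨hint, hae, by rw [GammaLC, hval, ereal_ennreal_coe_eq hJ, ← EReal.coe_add]⟩

end GammaParts
theorem Gamma_error_lower_bound (d : ℕ) (P : Measure (EuclideanSpace ℝ (Fin d)))
    [IsProbabilityMeasure P]
    (hmom : ∫⁻ x, ENNReal.ofReal ‖x‖ ∂P ≠ ⊤)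
    (hhyp : ∀ (v : EuclideanSpace ℝ (Fin d)) (r : ℝ), v ≠ 0 →
      P {x | (inner ℝ v x : ℝ) = r} < 1)
    (φs : EuclideanSpace ℝ (Fin d) → EReal) (hφs : CdE d φs)
    (hmin : ∀ ψ, CdE d ψ → GammaLC d P φs ≤ GammaLC d P ψ)
    (hfin : ∃ r : ℝ, GammaLC d P φs = (r : EReal))
    (φ : EuclideanSpace ℝ (Fin d) → EReal) (hφ : CdE d φ) (φ0 : ℝ)
    (hbd : ∀ x, φ x ≠ ⊤ → φs x ≠ ⊤ → φ x ≤ (φ0 : EReal) ∧ φs x ≤ (φ0 : EReal)) :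
    ((1 / 2 * Real.exp (-φ0) : ℝ) : EReal) *
        ((∫⁻ x in {x | φ x ≠ ⊤ ∧ φs x ≠ ⊤},
            ENNReal.ofReal (((φ x).toReal - (φs x).toReal) ^ 2)
            ∂(volume : Measure (EuclideanSpace ℝ (Fin d))) : ENNReal) : EReal) ≤
      GammaLC d P φ - GammaLC d P φs := by
  classical
  obtain ⟨gs, hgs⟩ := hfin
  by_cases hΓφ : GammaLC d P φ = ⊤
  · rw [hΓφ, hgs, EReal.top_sub_coe]
    exact le_top
  by_cases hS : ∃ x, φ x ≠ ⊤ ∧ φs x ≠ ⊤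
  swap
  · -- the intersection of the domains is empty
    have hSe : {x : EuclideanSpace ℝ (Fin d) | φ x ≠ ⊤ ∧ φs x ≠ ⊤} = ∅ := by
      rw [Set.eq_empty_iff_forall_notMem]
      intro x hx
      exact hS ⟨x, hx⟩
    rw [hSe, Measure.restrict_empty, lintegral_zero_measure]
    have h1 := hmin φ hφ
    rw [hgs] at h1 ⊢
    rw [EReal.coe_ennreal_zero, mul_zero]
    calc (0:EReal) = (gs : EReal) + (-(gs : EReal)) := by
          rw [← EReal.coe_neg, ← EReal.coe_add]; norm_num
      _ ≤ GammaLC d P φ + (-(gs:EReal)) := add_le_add_left h1 _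
      _ = GammaLC d P φ - (gs:EReal) := (sub_eq_add_neg _ _).symm
  -- main case
  obtain ⟨m1, hm1⟩ := hφ.bddBelow
  obtain ⟨m2, hm2⟩ := hφs.bddBelow
  have hφb : ∀ x, φ x ≠ ⊥ := hφ.2.1
  have hφsb : ∀ x, φs x ≠ ⊥ := hφs.2.1
  have hφm : Measurable φ := hφ.1.measurable
  have hφsm : Measurable φs := hφs.1.measurable
  have hΓφs_ne_top : GammaLC d P φs ≠ ⊤ := by rw [hgs]; exact EReal.coe_ne_top _
  obtain ⟨hpφ, hJφ⟩ := GammaLC_parts hm1 hΓφ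
  obtain ⟨hpφs, hJφs⟩ := GammaLC_parts hm2 hΓφs_ne_top
  obtain ⟨hintφ, haeφ, hreprφ⟩ := GammaLC_repr hm1 hφm hpφ hJφ
  obtain ⟨hintφs, haeφs, hreprφs⟩ := GammaLC_repr hm2 hφsm hpφs hJφs
  set Eφ : ℝ := ∫ x, (φ x).toReal ∂P with hEφdef
  set Eφs : ℝ := ∫ x, (φs x).toReal ∂P with hEφsdef
  set Jφ : ENNReal := ∫⁻ x, ENNReal.ofReal (negExpE (φ x))
      ∂(volume : Measure (EuclideanSpace ℝ (Fin d))) with hJφdef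
  set Jφs : ENNReal := ∫⁻ x, ENNReal.ofReal (negExpE (φs x))
      ∂(volume : Measure (EuclideanSpace ℝ (Fin d))) with hJφsdef
  set I : ENNReal := ∫⁻ x in {x | φ x ≠ ⊤ ∧ φs x ≠ ⊤},
      ENNReal.ofReal (((φ x).toReal - (φs x).toReal) ^ 2)
      ∂(volume : Measure (EuclideanSpace ℝ (Fin d))) with hIdef
  set D : ℝ := (Eφ + Jφ.toReal) - (Eφs + Jφs.toReal) with hDdef
  have hSmeas : MeasurableSet {x : EuclideanSpace ℝ (Fin d) | φ x ≠ ⊤ ∧ φs x ≠ ⊤} := by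
    have : {x : EuclideanSpace ℝ (Fin d) | φ x ≠ ⊤ ∧ φs x ≠ ⊤}
        = (φ ⁻¹' {⊤})ᶜ ∩ (φs ⁻¹' {⊤})ᶜ := by
      ext x
      simp [Set.mem_setOf_eq]
    rw [this]
    exact ((hφm (measurableSet_singleton ⊤)).compl).inter
      ((hφsm (measurableSet_singleton ⊤)).compl)
  have hmq : Measurable (fun x => ENNReal.ofReal (((φ x).toReal - (φs x).toReal) ^ 2)) :=
    ((hφm.ereal_toReal.sub hφsm.ereal_toReal).pow_const 2).ennreal_ofReal
  have hmepφ : Measurable fun x => eposPart (φ x) := measurable_eposPart.comp hφm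
  have hmepφs : Measurable fun x => eposPart (φs x) := measurable_eposPart.comp hφsm
  have hmneφ : Measurable fun x => ENNReal.ofReal (negExpE (φ x)) :=
    (measurable_negExpE.comp hφm).ennreal_ofReal
  have hmneφs : Measurable fun x => ENNReal.ofReal (negExpE (φs x)) :=
    (measurable_negExpE.comp hφsm).ennreal_ofReal
  -- the key inequality, for every l ∈ (0,1)
  have hkey : ∀ l : ℝ, 0 < l → l < 1 →
      I ≠ ⊤ ∧ (1 - l)/2 * Real.exp (-φ0) * I.toReal ≤ D := by
    intro l hl0 hl1
    have hl1' : (0:ℝ) < 1 - l := by linarith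
    set ψ : EuclideanSpace ℝ (Fin d) → EReal :=
      fun x => (l:EReal) * φ x + ((1-l:ℝ):EReal) * φs x with hψdef
    have hψC : CdE d ψ := hφ.combo hφs hl0 hl1 hS
    have hψm : Measurable ψ := hψC.1.measurable
    have hmψ : ∀ x, ((l*m1 + (1-l)*m2 : ℝ) : EReal) ≤ ψ x := by
      intro x
      rw [EReal.coe_add, ← cmul_coe, ← cmul_coe]
      exact add_le_add (cmul_mono hl0.le (hm1 x)) (cmul_mono hl1'.le (hm2 x))
    -- positive part of ψ is integrable
    have hppt : ∀ x, eposPart (ψ x) ≤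
        ENNReal.ofReal l * eposPart (φ x) + ENNReal.ofReal (1-l) * eposPart (φs x) := by
      intro x
      by_cases hx1 : φ x = ⊤
      · rw [hx1]
        have h1 : eposPart (⊤:EReal) = ⊤ := by rw [eposPart, if_pos rfl]
        rw [h1, ENNReal.mul_top (by simp [ENNReal.ofReal_eq_zero]; linarith), top_add]
        exact le_top
      by_cases hx2 : φs x = ⊤
      · rw [hx2]
        have h1 : eposPart (⊤:EReal) = ⊤ := by rw [eposPart, if_pos rfl]
        rw [h1, ENNReal.mul_top (by simp [ENNReal.ofReal_eq_zero]; linarith), add_top]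
        exact le_top
      · have hb1 := hφb x
        have hb2 := hφsb x
        rw [hψdef]
        simp only
        lift φ x to ℝ using ⟨hx1, hb1⟩ with a
        lift φs x to ℝ using ⟨hx2, hb2⟩ with b
        rw [cmul_coe, cmul_coe, ← EReal.coe_add]
        rw [eposPart, if_neg (EReal.coe_ne_top _), eposPart, if_neg (EReal.coe_ne_top _),
          eposPart, if_neg (EReal.coe_ne_top _), EReal.toReal_coe, EReal.toReal_coe,
          EReal.toReal_coe]
        refine le_trans ENNReal.ofReal_add_le (add_le_add ?_ ?_)
        · rw [← ENNReal.ofReal_mul hl0.le]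
        · rw [← ENNReal.ofReal_mul hl1'.le]
    have hpψ : ∫⁻ x, eposPart (ψ x) ∂P ≠ ⊤ := by
      refine ne_top_of_le_ne_top ?_ (lintegral_mono hppt)
      rw [lintegral_add_left (hmepφ.const_mul _),
        lintegral_const_mul _ hmepφ, lintegral_const_mul _ hmepφs]
      exact ENNReal.add_ne_top.2 ⟨ENNReal.mul_ne_top ENNReal.ofReal_ne_top hpφ,
        ENNReal.mul_ne_top ENNReal.ofReal_ne_top hpφs⟩
    -- pointwise exponential inequality
    have hexp_pt : ∀ x, ENNReal.ofReal (negExpE (ψ x)) +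
        ({x : EuclideanSpace ℝ (Fin d) | φ x ≠ ⊤ ∧ φs x ≠ ⊤}).indicator
          (fun x => ENNReal.ofReal (l*(1-l)/2 * Real.exp (-φ0)) *
            ENNReal.ofReal (((φ x).toReal - (φs x).toReal) ^ 2)) x ≤
        ENNReal.ofReal l * ENNReal.ofReal (negExpE (φ x)) +
          ENNReal.ofReal (1-l) * ENNReal.ofReal (negExpE (φs x)) := by
      intro x
      by_cases hx : x ∈ {x : EuclideanSpace ℝ (Fin d) | φ x ≠ ⊤ ∧ φs x ≠ ⊤}
      · have hx1 : φ x ≠ ⊤ := hx.1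
        have hx2 : φs x ≠ ⊤ := hx.2
        rw [Set.indicator_of_mem hx]
        obtain ⟨hbd1, hbd2⟩ := hbd x hx1 hx2
        have hb1 := hφb x
        have hb2 := hφsb x
        rw [hψdef]
        simp only
        lift φ x to ℝ using ⟨hx1, hb1⟩ with a
        lift φs x to ℝ using ⟨hx2, hb2⟩ with b
        have ha : a ≤ φ0 := by exact_mod_cast hbd1
        have hbb : b ≤ φ0 := by exact_mod_cast hbd2
        rw [cmul_coe, cmul_coe, ← EReal.coe_add]
        rw [negExpE, if_neg (EReal.coe_ne_top _), negExpE, if_neg (EReal.coe_ne_top _),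
          negExpE, if_neg (EReal.coe_ne_top _)]
        simp only [EReal.toReal_coe]
        rw [← ENNReal.ofReal_mul (by positivity), ← ENNReal.ofReal_mul hl0.le,
          ← ENNReal.ofReal_mul hl1'.le,
          ← ENNReal.ofReal_add (by positivity) (by positivity),
          ← ENNReal.ofReal_add (by positivity) (by positivity)]
        apply ENNReal.ofReal_le_ofReal
        have := exp_strong_convex ha hbb hl0.le hl1.le
        nlinarith [this]
      · rw [Set.indicator_of_notMem hx, add_zero]
        have hψtop : ψ x = ⊤ := by
          simp only [Set.mem_setOf_eq, not_and_or, not_not] at hx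
          rcases hx with hx | hx
          · rw [hψdef]
            simp only
            rw [hx, EReal.coe_mul_top_of_pos hl0,
              EReal.top_add_of_ne_bot (cmul_ne_bot hl1'.le (hφsb x))]
          · rw [hψdef]
            simp only
            rw [hx, EReal.coe_mul_top_of_pos hl1',
              EReal.add_top_of_ne_bot (cmul_ne_bot hl0.le (hφb x))]
        rw [hψtop]
        simp [negExpE]
    -- integrated exponential inequality
    have hexp_int : (∫⁻ x, ENNReal.ofReal (negExpE (ψ x))
          ∂(volume : Measure (EuclideanSpace ℝ (Fin d)))) +
        ENNReal.ofReal (l*(1-l)/2 * Real.exp (-φ0)) * I ≤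
        ENNReal.ofReal l * Jφ + ENNReal.ofReal (1-l) * Jφs := by
      have step1 : (∫⁻ x, ENNReal.ofReal (negExpE (ψ x))
            ∂(volume : Measure (EuclideanSpace ℝ (Fin d)))) +
          ENNReal.ofReal (l*(1-l)/2 * Real.exp (-φ0)) * I =
          ∫⁻ x, (ENNReal.ofReal (negExpE (ψ x)) +
            ({x : EuclideanSpace ℝ (Fin d) | φ x ≠ ⊤ ∧ φs x ≠ ⊤}).indicator
              (fun x => ENNReal.ofReal (l*(1-l)/2 * Real.exp (-φ0)) *
                ENNReal.ofReal (((φ x).toReal - (φs x).toReal) ^ 2)) x)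
            ∂(volume : Measure (EuclideanSpace ℝ (Fin d))) := by
        have hmneψ : Measurable fun x => ENNReal.ofReal (negExpE (ψ x)) :=
          (measurable_negExpE.comp hψm).ennreal_ofReal
        rw [lintegral_add_left hmneψ]
        congr 1
        rw [lintegral_indicator hSmeas, lintegral_const_mul _ hmq]
      have step2 : (∫⁻ x, (ENNReal.ofReal l * ENNReal.ofReal (negExpE (φ x)) +
            ENNReal.ofReal (1-l) * ENNReal.ofReal (negExpE (φs x)))
            ∂(volume : Measure (EuclideanSpace ℝ (Fin d)))) =
          ENNReal.ofReal l * Jφ + ENNReal.ofReal (1-l) * Jφs := by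
        rw [lintegral_add_left (hmneφ.const_mul _),
          lintegral_const_mul _ hmneφ, lintegral_const_mul _ hmneφs]
      rw [step1, ← step2]
      exact lintegral_mono hexp_pt
    have hRHSfin : ENNReal.ofReal l * Jφ + ENNReal.ofReal (1-l) * Jφs ≠ ⊤ :=
      ENNReal.add_ne_top.2 ⟨ENNReal.mul_ne_top ENNReal.ofReal_ne_top hJφ,
        ENNReal.mul_ne_top ENNReal.ofReal_ne_top hJφs⟩
    have hJψfin : (∫⁻ x, ENNReal.ofReal (negExpE (ψ x))
        ∂(volume : Measure (EuclideanSpace ℝ (Fin d)))) ≠ ⊤ :=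
      ne_top_of_le_ne_top hRHSfin (le_trans le_self_add hexp_int)
    have hcI : ENNReal.ofReal (l*(1-l)/2 * Real.exp (-φ0)) * I ≠ ⊤ :=
      ne_top_of_le_ne_top hRHSfin (le_trans le_add_self hexp_int)
    have hc_pos : (0:ℝ) < l*(1-l)/2 * Real.exp (-φ0) := by positivity
    have hIfin : I ≠ ⊤ := by
      intro hI
      rw [hI, ENNReal.mul_top (by simp [ENNReal.ofReal_eq_zero]; linarith)] at hcI
      exact hcI rfl
    refine ⟨hIfin, ?_⟩
    obtain ⟨hintψ, haeψ, hreprψ⟩ := GammaLC_repr hmψ hψm hpψ hJψfin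
    -- the linear part of Γ(ψ)
    have hEψ : ∫ x, (ψ x).toReal ∂P = l * Eφ + (1-l) * Eφs := by
      have hcong : ∀ᵐ x ∂P, (ψ x).toReal = l * (φ x).toReal + (1-l) * (φs x).toReal := by
        filter_upwards [haeφ, haeφs] with x h1 h2
        rw [hψdef]
        simp only
        lift φ x to ℝ using ⟨h1, hφb x⟩ with a
        lift φs x to ℝ using ⟨h2, hφsb x⟩ with b
        rw [cmul_coe, cmul_coe, ← EReal.coe_add, EReal.toReal_coe, EReal.toReal_coe,
          EReal.toReal_coe]
      rw [integral_congr_ae hcong,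
        integral_add (hintφ.const_mul l) (hintφs.const_mul (1-l)),
        integral_const_mul, integral_const_mul]
    have h1 := hmin ψ hψC
    rw [hreprφs, hreprψ, hEψ, EReal.coe_le_coe_iff] at h1
    -- pass hexp_int to the reals
    have hineq2 : (∫⁻ x, ENNReal.ofReal (negExpE (ψ x))
          ∂(volume : Measure (EuclideanSpace ℝ (Fin d)))).toReal +
        (l*(1-l)/2 * Real.exp (-φ0)) * I.toReal ≤
        l * Jφ.toReal + (1-l) * Jφs.toReal := by
      have h := ENNReal.toReal_mono hRHSfin hexp_int
      rw [ENNReal.toReal_add hJψfin hcI,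
        ENNReal.toReal_add (ENNReal.mul_ne_top ENNReal.ofReal_ne_top hJφ)
          (ENNReal.mul_ne_top ENNReal.ofReal_ne_top hJφs),
        ENNReal.toReal_mul, ENNReal.toReal_mul, ENNReal.toReal_mul,
        ENNReal.toReal_ofReal hc_pos.le, ENNReal.toReal_ofReal hl0.le,
        ENNReal.toReal_ofReal hl1'.le] at h
      exact h
    have h3 : l * ((1-l)/2 * Real.exp (-φ0) * I.toReal) ≤ l * D := by
      rw [hDdef]
      nlinarith [h1, hineq2]
    exact le_of_mul_le_mul_left h3 hl0
  obtain ⟨hIfin, -⟩ := hkey (1/2) (by norm_num) (by norm_num)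
  have hlim : (1:ℝ)/2 * Real.exp (-φ0) * I.toReal ≤ D := by
    have htend : Filter.Tendsto
        (fun n : ℕ => (1 - 1/((n:ℝ)+1))/2 * Real.exp (-φ0) * I.toReal)
        Filter.atTop (nhds ((1 - 0)/2 * Real.exp (-φ0) * I.toReal)) := by
      apply Filter.Tendsto.mul_const
      apply Filter.Tendsto.mul_const
      apply Filter.Tendsto.div_const
      exact tendsto_const_nhds.sub tendsto_one_div_add_atTop_nhds_zero_nat
    have heven : ∀ᶠ n : ℕ in Filter.atTop,
        (1 - 1/((n:ℝ)+1))/2 * Real.exp (-φ0) * I.toReal ≤ D := by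
      filter_upwards [Filter.eventually_ge_atTop 1] with n hn
      have hn' : (1:ℝ) ≤ (n:ℝ) := by exact_mod_cast hn
      refine (hkey (1/((n:ℝ)+1)) (by positivity) ?_).2
      rw [div_lt_one (by positivity)]
      linarith
    have := le_of_tendsto htend heven
    simpa using this
  rw [hreprφ, hreprφs, ← EReal.coe_sub, ereal_ennreal_coe_eq hIfin, cmul_coe,
    EReal.coe_le_coe_iff]
  rw [← hDdef]
  linarith [hlim]
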